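/- For n even, DP_n is a Gorenstein polytope of codegree n and its normalized volume equals n²/4. -/

import Mathlib

open Matrix Finset Pointwise

variable (n : ℕ) [NeZero n]

/-- Permutation matrix of `σ`: entries `δ_{i, σ(j)}`. -/
def permMat (σ : Equiv.Perm (ZMod n)) : Matrix (ZMod n) (ZMod n) ℝ :=
  Matrix.of fun i j => if i = σ j then 1 else 0

/-- Rotation `x ↦ x + 1` of the regular n-gon with vertex set `ZMod n`. -/
def rot : Equiv.Perm (ZMod n) := Equiv.addRight 1

/-- Reflection `x ↦ -x` of the regular n-gon. -/
def rfl' : Equiv.Perm (ZMod n) := Equiv.neg (ZMod n)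

/-- The dihedral group `D_n ≤ S_n`, symmetries of the regular n-gon. -/
def dihedral : Subgroup (Equiv.Perm (ZMod n)) := Subgroup.closure {rot n, rfl' n}

/-- Adjacency matrix of the n-cycle `C_n`. -/
def cycAdj : Matrix (ZMod n) (ZMod n) ℝ :=
  Matrix.of fun i j => if j = i + 1 ∨ j = i - 1 then 1 else 0

/-- The permutation polytope `DP_n = conv{M_σ : σ ∈ D_n} ⊆ ℝ^{n×n}`. -/
def DP : Set (Matrix (ZMod n) (ZMod n) ℝ) :=
  convexHull ℝ {M | ∃ σ ∈ dihedral n, M = permMat n σ}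

/-- The cyclic shift matrix `R`. -/
def Rmat : Matrix (ZMod n) (ZMod n) ℝ := Matrix.of fun i j => if j = i + 1 then 1 else 0

/-- The `2n` rows of `W = [[I,...,I],[I,R,...,R^{n-1}]]`, viewed as vectors in
`ℝ^{n²} = Matrix (ZMod n) (ZMod n) ℝ`; the first matrix coordinate is the block index. -/
def Wrow : Bool × ZMod n → Matrix (ZMod n) (ZMod n) ℝ
  | (false, k) => Matrix.of fun _ j => if j = k then 1 else 0
  | (true, k) => Matrix.of fun b j => (Rmat n ^ b.val) k j

/-- The polytope `Q_n ⊆ ℝ^{n²}`. -/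
def Qpoly : Set (Matrix (ZMod n) (ZMod n) ℝ) := convexHull ℝ (Set.range (Wrow n))

/-- A point of `ℝ^{n²}` is a lattice point if all its coordinates are integers. -/
def IsInt (x : Matrix (ZMod n) (ZMod n) ℝ) : Prop := ∀ b j, ∃ z : ℤ, x b j = (z : ℝ)

set_option linter.unusedSectionVars false
set_option linter.unnecessarySeqFocus false
set_option linter.unusedTactic false
set_option maxHeartbeats 1000000


open Finset

section Parity
variable (m : ℕ) [NeZero (2*m)]

/-- parity map ZMod (2m) → ZMod 2 -/
def par : ZMod (2*m) →+* ZMod 2 := ZMod.castHom ⟨m, rfl⟩ (ZMod 2)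

lemma par_natCast (a : ℕ) : par m (a : ZMod (2*m)) = (a : ZMod 2) := by
  simp [par, map_natCast]

lemma par_sub_eq_add (p q : ZMod (2*m)) : par m (p - q) = par m (p + q) := by
  have h : ∀ a : ZMod 2, -a = a := by decide
  rw [sub_eq_add_neg, map_add, map_add, map_neg, h]

lemma exists_double {z : ZMod (2*m)} (hz : par m z = 0) : ∃ y : ZMod (2*m), y + y = z := by
  have hv : ((z.val : ℕ) : ZMod 2) = 0 := by
    rw [← par_natCast m z.val]
    rw [ZMod.natCast_val, ZMod.cast_id]
    exact hz
  have h2 : 2 ∣ z.val := (ZMod.natCast_eq_zero_iff _ _).mp hv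
  obtain ⟨t, ht⟩ := h2
  refine ⟨(t : ZMod (2*m)), ?_⟩
  have : ((z.val : ℕ) : ZMod (2*m)) = z := by rw [ZMod.natCast_val, ZMod.cast_id]
  rw [← this, ht]
  push_cast
  ring

/-- index equiv -/
def eIdx : Bool × Fin m → ZMod (2*m) := fun p => ((2 * p.2.val + (if p.1 then 1 else 0) : ℕ) : ZMod (2*m))

lemma eIdx_val (p : Bool × Fin m) : (eIdx m p).val = 2 * p.2.val + (if p.1 then 1 else 0) := by
  apply ZMod.val_cast_of_lt
  have := p.2.isLt
  cases p.1 <;> simp <;> omega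

lemma eIdx_injective : Function.Injective (eIdx m) := by
  intro p q h
  have hp := eIdx_val m p
  have hq := eIdx_val m q
  rw [h] at hp
  have : 2 * p.2.val + (if p.1 then 1 else 0) = 2 * q.2.val + (if q.1 then 1 else 0) :=
    hp.symm.trans hq
  cases hb : p.1 <;> cases hc : q.1 <;> simp only [hb, hc, if_true, if_false, Bool.false_eq_true, Bool.true_eq_false] at this
  · exact Prod.ext (hb.trans hc.symm) (Fin.ext (by omega))
  · omega
  · omega
  · exact Prod.ext (hb.trans hc.symm) (Fin.ext (by omega))

lemma eIdx_surjective : Function.Surjective (eIdx m) := by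
  intro z
  have hm0 : 0 < m := Nat.pos_of_ne_zero (by have := NeZero.ne (2*m); omega)
  have hv : z.val < 2 * m := ZMod.val_lt z
  refine ⟨(z.val % 2 = 1, ⟨z.val / 2, by omega⟩), ?_⟩
  have : 2 * (z.val / 2) + (if z.val % 2 = 1 then 1 else 0) = z.val := by
    rcases Nat.mod_two_eq_zero_or_one z.val with h | h <;> simp [h] <;> omega
  have hz : ((z.val : ℕ) : ZMod (2*m)) = z := by rw [ZMod.natCast_val, ZMod.cast_id]
  unfold eIdx
  simp only [decide_eq_true_eq]
  rw [this, hz]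

noncomputable def eEquiv : Bool × Fin m ≃ ZMod (2*m) :=
  Equiv.ofBijective (eIdx m) ⟨eIdx_injective m, eIdx_surjective m⟩

lemma par_eIdx (p : Bool × Fin m) : par m (eIdx m p) = (if p.1 then 1 else 0) := by
  rw [eIdx, par_natCast]
  have h2 : (2 : ZMod 2) = 0 := by decide
  cases hb : p.1 <;> simp [hb] <;> push_cast <;> simp [h2]

lemma par_eEquiv (p : Bool × Fin m) : par m (eEquiv m p) = (if p.1 then 1 else 0) := par_eIdx m p

end Parity



/-- reflection x ↦ c - x -/
def reflP (c : ZMod n) : Equiv.Perm (ZMod n) := (Equiv.neg (ZMod n)).trans (Equiv.addLeft c)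

lemma reflP_apply (c x : ZMod n) : reflP n c x = c - x := by
  simp [reflP, sub_eq_add_neg]

lemma addRight_apply (c x : ZMod n) : Equiv.addRight c x = x + c := rfl

/-- the subgroup of translations and reflections -/
def TR : Subgroup (Equiv.Perm (ZMod n)) where
  carrier := {σ | (∃ c, σ = Equiv.addRight c) ∨ (∃ c, σ = reflP n c)}
  one_mem' := Or.inl ⟨0, by ext x; simp [addRight_apply]⟩
  mul_mem' := by
    rintro σ τ (⟨c, rfl⟩ | ⟨c, rfl⟩) (⟨d, rfl⟩ | ⟨d, rfl⟩)
    · exact Or.inl ⟨d + c, by ext x; simp [Equiv.Perm.mul_apply, addRight_apply]; try ring⟩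
    · exact Or.inr ⟨d + c, by ext x; simp [Equiv.Perm.mul_apply, addRight_apply, reflP_apply]; try ring⟩
    · exact Or.inr ⟨c - d, by ext x; simp [Equiv.Perm.mul_apply, addRight_apply, reflP_apply]; try ring⟩
    · exact Or.inl ⟨c - d, by ext x; simp [Equiv.Perm.mul_apply, addRight_apply, reflP_apply]; try ring⟩
  inv_mem' := by
    rintro σ (⟨c, rfl⟩ | ⟨c, rfl⟩)
    · refine Or.inl ⟨-c, ?_⟩
      rw [eq_comm, eq_inv_iff_mul_eq_one]
      ext x; simp [Equiv.Perm.mul_apply, addRight_apply]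
    · refine Or.inr ⟨c, ?_⟩
      rw [eq_comm, eq_inv_iff_mul_eq_one]
      ext x; simp [Equiv.Perm.mul_apply, reflP_apply]

lemma rot_pow (k : ℕ) : (rot n) ^ k = Equiv.addRight (k : ZMod n) := by
  induction k with
  | zero => ext x; simp [addRight_apply]
  | succ k ih =>
    rw [pow_succ, ih]
    ext x
    simp [Equiv.Perm.mul_apply, addRight_apply, rot]
    push_cast
    ring

lemma addRight_mem_dihedral (c : ZMod n) : Equiv.addRight c ∈ dihedral n := by
  have : Equiv.addRight c = (rot n) ^ c.val := by
    rw [rot_pow, ZMod.natCast_val, ZMod.cast_id]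
  rw [this]
  exact pow_mem (Subgroup.subset_closure (by simp)) _

lemma reflP_mem_dihedral (c : ZMod n) : reflP n c ∈ dihedral n := by
  have : reflP n c = (rot n) ^ c.val * rfl' n := by
    rw [rot_pow, ZMod.natCast_val, ZMod.cast_id]
    ext x
    simp [Equiv.Perm.mul_apply, addRight_apply, reflP_apply, rfl', sub_eq_add_neg, add_comm]
  rw [this]
  exact mul_mem (pow_mem (Subgroup.subset_closure (by simp)) _)
    (Subgroup.subset_closure (by simp))

lemma dihedral_eq_TR : dihedral n = TR n := by
  apply le_antisymm
  · rw [dihedral, Subgroup.closure_le]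
    rintro σ (rfl | rfl)
    · exact Or.inl ⟨1, rfl⟩
    · refine Or.inr ⟨0, ?_⟩
      ext x
      simp [rfl', reflP_apply]
  · rintro σ (⟨c, rfl⟩ | ⟨c, rfl⟩)
    · exact addRight_mem_dihedral n c
    · exact reflP_mem_dihedral n c

lemma mem_dihedral_iff (σ : Equiv.Perm (ZMod n)) :
    σ ∈ dihedral n ↔ (∃ c, σ = Equiv.addRight c) ∨ (∃ c, σ = reflP n c) := by
  rw [dihedral_eq_TR]; rfl


/-- vertex matrices -/
def vMat : ZMod n ⊕ ZMod n → Matrix (ZMod n) (ZMod n) ℝ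
  | Sum.inl c => Matrix.of fun p q => if p = q + c then 1 else 0
  | Sum.inr c => Matrix.of fun p q => if p = c - q then 1 else 0

lemma vMat_inl (c : ZMod n) : vMat n (Sum.inl c) = permMat n (Equiv.addRight c) := by
  ext p q; simp [vMat, permMat, addRight_apply]; congr

lemma vMat_inr (c : ZMod n) : vMat n (Sum.inr c) = permMat n (reflP n c) := by
  ext p q; simp [vMat, permMat, reflP_apply]

lemma vMat_mem (i : ZMod n ⊕ ZMod n) : vMat n i ∈ {M | ∃ σ ∈ dihedral n, M = permMat n σ} := by
  cases i with
  | inl c => exact ⟨_, addRight_mem_dihedral n c, vMat_inl n c⟩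
  | inr c => exact ⟨_, reflP_mem_dihedral n c, vMat_inr n c⟩

lemma mem_DP_iff (y : Matrix (ZMod n) (ZMod n) ℝ) :
    y ∈ DP n ↔ ∃ a b : ZMod n → ℝ, (∀ i, 0 ≤ a i) ∧ (∀ i, 0 ≤ b i) ∧
      ((∑ i, a i) + (∑ i, b i) = 1) ∧ ∀ p q, y p q = a (p - q) + b (p + q) := by
  constructor
  · intro hy
    rw [DP, mem_convexHull_iff_exists_fintype] at hy
    obtain ⟨ι, _, w, z, hw0, hw1, hz, hx⟩ := hy
    -- choose indices
    have hch : ∀ i : ι, ∃ j : ZMod n ⊕ ZMod n, z i = vMat n j := by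
      intro i
      obtain ⟨σ, hσ, hzi⟩ := hz i
      rcases (mem_dihedral_iff n σ).mp hσ with ⟨c, rfl⟩ | ⟨c, rfl⟩
      · exact ⟨Sum.inl c, by rw [hzi, vMat_inl]⟩
      · exact ⟨Sum.inr c, by rw [hzi, vMat_inr]⟩
    choose g hg using hch
    classical
    refine ⟨fun d => ∑ i : ι, if g i = Sum.inl d then w i else 0,
            fun c => ∑ i : ι, if g i = Sum.inr c then w i else 0,
            fun d => Finset.sum_nonneg fun i _ => by split <;> simp [hw0 i],
            fun c => Finset.sum_nonneg fun i _ => by split <;> simp [hw0 i], ?_, ?_⟩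
    · have h1 : ∀ i : ι, ((∑ x : ZMod n, if g i = Sum.inl x then w i else 0) +
          (∑ x : ZMod n, if g i = Sum.inr x then w i else 0)) = w i := by
        intro i
        cases hgi : g i with
        | inl c => simp [hgi, Sum.inl.injEq, Finset.sum_ite_eq]
        | inr c => simp [hgi, Sum.inr.injEq, Finset.sum_ite_eq]
      rw [← Finset.sum_add_distrib]
      calc ∑ x : ZMod n, ((∑ i : ι, if g i = Sum.inl x then w i else 0) +
              ∑ i : ι, if g i = Sum.inr x then w i else 0)
          = ∑ x : ZMod n, ∑ i : ι, ((if g i = Sum.inl x then w i else 0) +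
              (if g i = Sum.inr x then w i else 0)) := by
            exact Finset.sum_congr rfl fun x _ => (Finset.sum_add_distrib).symm
        _ = ∑ i : ι, ∑ x : ZMod n, ((if g i = Sum.inl x then w i else 0) +
              (if g i = Sum.inr x then w i else 0)) := Finset.sum_comm
        _ = ∑ i : ι, w i := Finset.sum_congr rfl fun i _ => by
            rw [Finset.sum_add_distrib]; exact h1 i
        _ = 1 := hw1
    · intro p q
      rw [← hx]
      rw [Matrix.sum_apply]
      simp only [Matrix.smul_apply, smul_eq_mul]
      rw [← Finset.sum_add_distrib]
      apply Finset.sum_congr rfl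
      intro i _
      rw [hg i]
      cases hgi : g i with
      | inl c =>
        have hiff : p = q + c ↔ Sum.inl c = (Sum.inl (p - q) : ZMod n ⊕ ZMod n) := by
          rw [Sum.inl.injEq]
          constructor
          · intro h; rw [h]; ring
          · intro h; rw [h]; ring
        simp only [vMat, Matrix.of_apply, hgi]
        by_cases h : p = q + c
        · rw [if_pos h, if_pos (hiff.mp h), if_neg (by simp), mul_one, add_zero]
        · rw [if_neg h, if_neg (fun hc => h (hiff.mpr hc)), if_neg (by simp), mul_zero, add_zero]
      | inr c =>
        have hiff : p = c - q ↔ Sum.inr c = (Sum.inr (p + q) : ZMod n ⊕ ZMod n) := by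
          rw [Sum.inr.injEq]
          constructor
          · intro h; rw [h]; ring
          · intro h; rw [h]; ring
        simp only [vMat, Matrix.of_apply, hgi]
        by_cases h : p = c - q
        · rw [if_pos h, if_pos (hiff.mp h), if_neg (by simp), mul_one, zero_add]
        · rw [if_neg h, if_neg (fun hc => h (hiff.mpr hc)), if_neg (by simp), mul_zero, zero_add]
  · rintro ⟨a, b, ha, hb, hsum, hy⟩
    rw [DP]
    apply mem_convexHull_of_exists_fintype (ι := ZMod n ⊕ ZMod n)
      (w := Sum.elim a b) (z := vMat n)
    · rintro (c | c) <;> simp [ha, hb]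
    · simpa using hsum
    · exact vMat_mem n
    · ext p q
      rw [Matrix.sum_apply]
      rw [Fintype.sum_sum_type]
      simp only [Matrix.smul_apply, smul_eq_mul, Sum.elim_inl, Sum.elim_inr]
      rw [hy p q]
      congr 1
      · have : ∀ c : ZMod n, a c * vMat n (Sum.inl c) p q = if c = p - q then a c else 0 := by
          intro c
          simp only [vMat, Matrix.of_apply]
          by_cases h : c = p - q
          · rw [if_pos (by rw [h]; ring), if_pos h, mul_one]
          · rw [if_neg (fun hc => h (by rw [hc]; ring)), if_neg h, mul_zero]
        rw [Finset.sum_congr rfl (fun c _ => this c), Finset.sum_ite_eq' Finset.univ (p - q) a,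
          if_pos (Finset.mem_univ _)]
      · have : ∀ c : ZMod n, b c * vMat n (Sum.inr c) p q = if c = p + q then b c else 0 := by
          intro c
          simp only [vMat, Matrix.of_apply]
          by_cases h : c = p + q
          · rw [if_pos (by rw [h]; ring), if_pos h, mul_one]
          · rw [if_neg (fun hc => h (by rw [hc]; ring)), if_neg h, mul_zero]
        rw [Finset.sum_congr rfl (fun c _ => this c), Finset.sum_ite_eq' Finset.univ (p + q) b,
          if_pos (Finset.mem_univ _)]
lemma DP_nonempty : (DP n).Nonempty :=
  ⟨permMat n 1, subset_convexHull ℝ _ ⟨1, one_mem _, rfl⟩⟩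

lemma mem_smul_DP (r : ℝ) (hr : 0 ≤ r) (x : Matrix (ZMod n) (ZMod n) ℝ) :
    x ∈ r • DP n ↔ ∃ a b : ZMod n → ℝ, (∀ i, 0 ≤ a i) ∧ (∀ i, 0 ≤ b i) ∧
      ((∑ i, a i) + (∑ i, b i) = r) ∧ ∀ p q, x p q = a (p - q) + b (p + q) := by
  rcases eq_or_lt_of_le hr with hr0 | hrpos
  · rw [← hr0, Set.zero_smul_set (DP_nonempty n)]
    constructor
    · rintro hx
      refine ⟨0, 0, fun _ => le_refl 0, fun _ => le_refl 0, by simp, ?_⟩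
      intro p q
      simp only [Set.mem_zero] at hx
      rw [hx]
      simp
    · rintro ⟨a, b, ha, hb, hsum, hx⟩
      have hA : (0:ℝ) ≤ ∑ i, a i := Finset.sum_nonneg fun i _ => ha i
      have hB : (0:ℝ) ≤ ∑ i, b i := Finset.sum_nonneg fun i _ => hb i
      have hs0 : ∀ i, a i = 0 := fun i =>
        (Finset.sum_eq_zero_iff_of_nonneg (fun i _ => ha i)).mp (by linarith) i (Finset.mem_univ i)
      have hs0' : ∀ i, b i = 0 := fun i =>
        (Finset.sum_eq_zero_iff_of_nonneg (fun i _ => hb i)).mp (by linarith) i (Finset.mem_univ i)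
      have : x = 0 := by
        ext p q
        rw [hx p q, hs0, hs0']
        simp
      rw [this]
      exact Set.zero_mem_zero
  · have hne : r ≠ 0 := ne_of_gt hrpos
    rw [Set.mem_smul_set_iff_inv_smul_mem₀ hne, mem_DP_iff]
    constructor
    · rintro ⟨a, b, ha, hb, hsum, hx⟩
      refine ⟨r • a, r • b, fun i => mul_nonneg hr (ha i), fun i => mul_nonneg hr (hb i), ?_, ?_⟩
      · simp only [Pi.smul_apply, smul_eq_mul, ← Finset.mul_sum]
        rw [← mul_add, hsum, mul_one]
      · intro p q
        have h1 := hx p q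
        simp only [Matrix.smul_apply, smul_eq_mul] at h1
        simp only [Pi.smul_apply, smul_eq_mul]
        have h2 : x p q = r * (a (p - q) + b (p + q)) := by
          rw [← h1, ← mul_assoc, mul_inv_cancel₀ hne, one_mul]
        rw [h2]; ring
    · rintro ⟨a, b, ha, hb, hsum, hx⟩
      refine ⟨r⁻¹ • a, r⁻¹ • b, fun i => mul_nonneg (inv_nonneg.mpr hr) (ha i),
        fun i => mul_nonneg (inv_nonneg.mpr hr) (hb i), ?_, ?_⟩
      · simp only [Pi.smul_apply, smul_eq_mul, ← Finset.mul_sum]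
        rw [← mul_add, hsum, inv_mul_cancel₀ hne]
      · intro p q
        simp only [Matrix.smul_apply, smul_eq_mul, Pi.smul_apply]
        rw [hx p q]
        ring

section M
variable (m : ℕ) [NeZero (2*m)]

lemma exists_fiber (e : ZMod 2) : ∃ s : ZMod (2*m), par m s = e := by
  fin_cases e
  · exact ⟨0, map_zero _⟩
  · exact ⟨1, map_one _⟩

lemma pairing {d s : ZMod (2*m)} (h : par m d = par m s) :
    ∃ p q : ZMod (2*m), p - q = d ∧ p + q = s := by
  have hds : par m (d + s) = 0 := by
    rw [map_add, ← h]
    have : ∀ a : ZMod 2, a + a = 0 := by decide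
    exact this _
  obtain ⟨y, hy⟩ := exists_double m hds
  refine ⟨y, y - d, by ring, ?_⟩
  have h2 : y + (y - d) = (y + y) - d := by ring
  rw [h2, hy]
  ring

/-- the matrix associated to integer data -/
def Phi (ab : (ZMod (2*m) → ℕ) × (ZMod (2*m) → ℕ)) : Matrix (ZMod (2*m)) (ZMod (2*m)) ℝ :=
  Matrix.of fun p q => (ab.1 (p - q) : ℝ) + (ab.2 (p + q) : ℝ)

/-- normalized integer data -/
def Tset (k : ℕ) : Set ((ZMod (2*m) → ℕ) × (ZMod (2*m) → ℕ)) :=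
  {ab | ((∑ i, ab.1 i) + (∑ i, ab.2 i) = k) ∧
    ∀ e : ZMod 2, ∃ s, par m s = e ∧ ab.2 s = 0}

lemma Phi_image (k : ℕ) :
    Phi m '' Tset m k = {x | x ∈ (k : ℝ) • DP (2*m) ∧ IsInt (2*m) x} := by
  apply Set.Subset.antisymm
  · rintro x ⟨⟨a, b⟩, ⟨hsum, hmin⟩, rfl⟩
    constructor
    · rw [mem_smul_DP (2*m) (k:ℝ) (Nat.cast_nonneg k)]
      refine ⟨fun i => (a i : ℝ), fun i => (b i : ℝ), fun i => Nat.cast_nonneg _,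
        fun i => Nat.cast_nonneg _, ?_, fun p q => rfl⟩
      push_cast
      exact_mod_cast congrArg (Nat.cast : ℕ → ℝ) hsum
    · intro p q
      exact ⟨(a (p - q) : ℤ) + (b (p + q) : ℤ), by push_cast; rfl⟩
  · rintro x ⟨hx, hint⟩
    rw [mem_smul_DP (2*m) (k:ℝ) (Nat.cast_nonneg k)] at hx
    obtain ⟨a, b, ha, hb, hsum, hent⟩ := hx
    classical
    -- minimizers on each fiber
    have hfib : ∀ e : ZMod 2, ∃ s0 : ZMod (2*m), par m s0 = e ∧
        ∀ s, par m s = e → b s0 ≤ b s := by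
      intro e
      obtain ⟨s, hs⟩ := exists_fiber m e
      obtain ⟨s0, hs0mem, hs0min⟩ := Finset.exists_min_image
        (Finset.univ.filter (fun s => par m s = e)) b
        ⟨s, Finset.mem_filter.mpr ⟨Finset.mem_univ _, hs⟩⟩
      rw [Finset.mem_filter] at hs0mem
      exact ⟨s0, hs0mem.2, fun t ht => hs0min t (Finset.mem_filter.mpr ⟨Finset.mem_univ _, ht⟩)⟩
    choose s0 hs0par hs0min using hfib
    set a' : ZMod (2*m) → ℝ := fun d => a d + b (s0 (par m d)) with ha'
    set b' : ZMod (2*m) → ℝ := fun s => b s - b (s0 (par m s)) with hb'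
    have hb'0 : ∀ e, b' (s0 e) = 0 := by
      intro e; simp only [hb', hs0par e, sub_self]
    have hab' : ∀ d s, par m d = par m s → a' d + b' s = a d + b s := by
      intro d s h
      simp only [ha', hb', h]
      ring
    have hent' : ∀ p q, x p q = a' (p - q) + b' (p + q) := by
      intro p q
      rw [hab' _ _ (par_sub_eq_add m p q)]
      exact hent p q
    -- integrality of a'
    have hA : ∀ d, ∃ z : ℕ, (z : ℝ) = a' d := by
      intro d
      obtain ⟨p, q, hpq1, hpq2⟩ := pairing m (show par m d = par m (s0 (par m d)) from (hs0par _).symm)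
      obtain ⟨z, hz⟩ := hint p q
      have hx1 : x p q = a' d := by
        rw [hent' p q, hpq1, hpq2, hb'0]
        ring
      have hz' : (z : ℝ) = a' d := by rw [← hz, hx1]
      have hznn : (0:ℝ) ≤ z := by
        rw [hz']
        exact add_nonneg (ha d) (hb _)
      have hz0 : 0 ≤ z := by exact_mod_cast hznn
      refine ⟨z.toNat, ?_⟩
      rw [show ((z.toNat : ℕ) : ℝ) = ((z.toNat : ℤ) : ℝ) by push_cast; ring,
        Int.toNat_of_nonneg hz0]
      exact hz'
    choose A hA' using hA
    have hB : ∀ s, ∃ z : ℕ, (z : ℝ) = b' s := by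
      intro s
      obtain ⟨p, q, hpq1, hpq2⟩ := pairing m (show par m (s0 (par m s)) = par m s from hs0par _)
      obtain ⟨z, hz⟩ := hint p q
      have hx1 : x p q = a' (s0 (par m s)) + b' s := by rw [hent' p q, hpq1, hpq2]
      have hbnn : (0:ℝ) ≤ b' s := by
        simp only [hb', sub_nonneg]
        exact hs0min (par m s) s rfl
      have : (z : ℝ) - (A (s0 (par m s)) : ℝ) = b' s := by
        rw [hA', ← hz, hx1]; ring
      set w : ℤ := z - (A (s0 (par m s)) : ℤ) with hwdef
      have hw : (w : ℝ) = b' s := by rw [hwdef]; push_cast; exact this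
      have hw0 : 0 ≤ w := by
        rw [← hw] at hbnn
        exact_mod_cast hbnn
      refine ⟨w.toNat, ?_⟩
      rw [show ((w.toNat : ℕ) : ℝ) = ((w.toNat : ℤ) : ℝ) by push_cast; ring,
        Int.toNat_of_nonneg hw0]
      exact hw
    choose B hB' using hB
    refine ⟨(A, B), ⟨?_, ?_⟩, ?_⟩
    · -- sum condition
      have hcast : ((∑ i, A i : ℕ) : ℝ) + ((∑ i, B i : ℕ) : ℝ) = (k : ℝ) := by
        push_cast
        rw [Finset.sum_congr rfl (fun i _ => hA' i), Finset.sum_congr rfl (fun i _ => hB' i)]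
        simp only [ha', hb']
        rw [Finset.sum_add_distrib, Finset.sum_sub_distrib]
        linarith [hsum]
      exact_mod_cast hcast
    · intro e
      refine ⟨s0 e, hs0par e, ?_⟩
      have : (B (s0 e) : ℝ) = 0 := by rw [hB', hb'0]
      exact_mod_cast this
    · ext p q
      simp only [Phi, Matrix.of_apply]
      rw [hA', hB', ← hent' p q]
lemma Phi_injOn (k : ℕ) : Set.InjOn (Phi m) (Tset m k) := by
  rintro ⟨a, b⟩ ⟨hsum, hmin⟩ ⟨a2, b2⟩ ⟨hsum2, hmin2⟩ heq
  dsimp only at hsum hmin hsum2 hmin2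
  have hent : ∀ d s, par m d = par m s → a d + b s = a2 d + b2 s := by
    intro d s h
    obtain ⟨p, q, hpq1, hpq2⟩ := pairing m h
    have := congrFun (congrFun heq p) q
    simp only [Phi, Matrix.of_apply, hpq1, hpq2] at this
    exact_mod_cast this
  have hfib : ∀ e : ZMod 2, (∀ d, par m d = e → a d = a2 d) ∧
      (∀ s, par m s = e → b s = b2 s) := by
    intro e
    obtain ⟨s1, hs1, hb1⟩ := hmin e
    obtain ⟨s2, hs2, hb2⟩ := hmin2 e
    have key : ∀ d, par m d = e → a d = a2 d := by
      intro d hd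
      have e1 := hent d s1 (by rw [hd, hs1])
      have e2 := hent d s2 (by rw [hd, hs2])
      omega
    refine ⟨key, fun s hs => ?_⟩
    have := hent s1 s (by rw [hs1, hs])
    have hk := key s1 hs1
    omega
  have : a = a2 ∧ b = b2 := by
    constructor
    · funext d; exact (hfib (par m d)).1 d rfl
    · funext s; exact (hfib (par m s)).2 s rfl
  rw [Prod.mk.injEq]
  exact this

lemma ncard_lattice (k : ℕ) :
    {x | x ∈ (k : ℝ) • DP (2*m) ∧ IsInt (2*m) x}.ncard = (Tset m k).ncard := by
  rw [← Phi_image m k]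
  exact Set.ncard_image_of_injOn (Phi_injOn m k)
end M


-- finiteness helpers
lemma finite_sumEq (d S : ℕ) : Finite {f : Fin d → ℕ // ∑ i, f i = S} := by
  apply Finite.of_injective (β := Fin d → Fin (S+1))
    (fun f => fun j => ⟨f.1 j, by
      have h := Finset.single_le_sum (f := f.1) (fun i _ => Nat.zero_le _) (Finset.mem_univ j)
      rw [f.2] at h
      omega⟩)
  intro f g h
  apply Subtype.ext
  funext j
  exact congrArg Fin.val (congrFun h j)

lemma finite_fiber_of_inj {A B : Type*} (g : A → B) (hg : Function.Injective g)
    [Finite B] : Finite A := Finite.of_injective g hg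

/-- convolution lemma -/
lemma conv_card {A B : Type*} (fA : A → ℕ) (fB : B → ℕ)
    (hA : ∀ i, Finite {a : A // fA a = i}) (hB : ∀ i, Finite {b : B // fB b = i}) (k : ℕ) :
    Nat.card {x : A × B // fA x.1 + fB x.2 = k}
      = ∑ p ∈ Finset.HasAntidiagonal.antidiagonal k,
          Nat.card {a : A // fA a = p.1} * Nat.card {b : B // fB b = p.2} := by
  classical
  have e : {x : A × B // fA x.1 + fB x.2 = k} ≃
      Σ p : (Finset.HasAntidiagonal.antidiagonal k : Finset (ℕ×ℕ)),
        ({a : A // fA a = (p : ℕ×ℕ).1} × {b : B // fB b = (p : ℕ×ℕ).2}) := {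
    toFun := fun x => ⟨⟨(fA x.1.1, fB x.1.2), Finset.HasAntidiagonal.mem_antidiagonal.mpr x.2⟩,
      ⟨x.1.1, rfl⟩, ⟨x.1.2, rfl⟩⟩
    invFun := fun y => ⟨(y.2.1.1, y.2.2.1), by
      rw [y.2.1.2, y.2.2.2]; exact Finset.HasAntidiagonal.mem_antidiagonal.mp y.1.2⟩
    left_inv := fun x => rfl
    right_inv := fun y => by
      obtain ⟨⟨⟨p1, p2⟩, hp⟩, ⟨a, ha⟩, ⟨b, hb⟩⟩ := y
      dsimp only at ha hb
      subst ha; subst hb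
      rfl }
  rw [Nat.card_congr e]
  haveI : ∀ p : (Finset.HasAntidiagonal.antidiagonal k : Finset (ℕ×ℕ)),
      Fintype ({a : A // fA a = (p : ℕ×ℕ).1} × {b : B // fB b = (p : ℕ×ℕ).2}) := by
    intro p
    haveI := hA (p : ℕ×ℕ).1
    haveI := hB (p : ℕ×ℕ).2
    exact Fintype.ofFinite _
  rw [Nat.card_eq_fintype_card, Fintype.card_sigma]
  rw [← Finset.sum_coe_sort (Finset.HasAntidiagonal.antidiagonal k)
    (fun p => Nat.card {a : A // fA a = p.1} * Nat.card {b : B // fB b = p.2})]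
  apply Finset.sum_congr rfl
  intro p _
  haveI := hA (p : ℕ×ℕ).1
  haveI := hB (p : ℕ×ℕ).2
  rw [← Nat.card_prod, Nat.card_eq_fintype_card]

/-- number of d-tuples with sum S -/
noncomputable def Wt (d S : ℕ) : ℕ := Nat.card {f : Fin d → ℕ // ∑ i, f i = S}

lemma mk_Wt (d : ℕ) : (PowerSeries.mk fun S => (Wt d S : ℤ)) = (PowerSeries.mk 1) ^ d := by
  induction d with
  | zero =>
    ext S
    rw [PowerSeries.coeff_mk, pow_zero, PowerSeries.coeff_one]
    unfold Wt
    rcases eq_or_ne S 0 with rfl | hS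
    · haveI : Unique {f : Fin 0 → ℕ // ∑ i, f i = 0} :=
        ⟨⟨⟨fun j => j.elim0, by simp⟩⟩, by rintro ⟨f, hf⟩; apply Subtype.ext; funext j; exact j.elim0⟩
      simp [Nat.card_unique]
    · haveI : IsEmpty {f : Fin 0 → ℕ // ∑ i, f i = S} := by
        constructor; rintro ⟨f, hf⟩; simp at hf; exact hS hf.symm
      rw [@Nat.card_of_isEmpty _ this]
      simp [hS]
  | succ d ih =>
    ext k
    rw [PowerSeries.coeff_mk, pow_succ, ← ih, PowerSeries.coeff_mul]
    have e1 : {f : Fin (d+1) → ℕ // ∑ i, f i = k} ≃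
        {x : (Fin d → ℕ) × ℕ // (∑ i, x.1 i) + x.2 = k} := {
      toFun := fun f => ⟨(Fin.tail f.1, f.1 0), by
        have := f.2
        rw [Fin.sum_univ_succ] at this
        dsimp only [Fin.tail]
        omega⟩
      invFun := fun x => ⟨Fin.cons x.1.2 x.1.1, by
        rw [Fin.sum_univ_succ]
        simp only [Fin.cons_zero, Fin.cons_succ]
        have := x.2
        omega⟩
      left_inv := fun f => by
        apply Subtype.ext
        exact Fin.cons_self_tail f.1
      right_inv := fun x => by
        apply Subtype.ext
        simp only [Fin.cons_zero, Fin.cons_succ]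
        exact Prod.ext (funext fun j => by simp [Fin.tail]) rfl }
    have h2 := conv_card (fun g : Fin d → ℕ => ∑ i, g i) (fun c : ℕ => c)
      (fun i => finite_sumEq d i) (fun i => by
        haveI : Unique {b : ℕ // b = i} := ⟨⟨⟨i, rfl⟩⟩, by rintro ⟨b, rfl⟩; rfl⟩
        infer_instance) k
    have : Wt (d+1) k = ∑ p ∈ Finset.HasAntidiagonal.antidiagonal k, Wt d p.1 * (Nat.card {b : ℕ // b = p.2}) := by
      unfold Wt
      rw [Nat.card_congr e1]
      exact h2
    rw [this]
    push_cast
    apply Finset.sum_congr rfl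
    intro p _
    haveI : Unique {b : ℕ // b = p.2} := ⟨⟨⟨p.2, rfl⟩⟩, by rintro ⟨b, rfl⟩; rfl⟩
    rw [@Nat.card_unique _ _ _]
    simp [PowerSeries.coeff_mk]

section PairCounts
variable (m : ℕ)

lemma finite_pairsum (i : ℕ) :
    Finite {x : (Fin m → ℕ) × (Fin m → ℕ) // (∑ j, x.1 j) + (∑ j, x.2 j) = i} := by
  apply Finite.of_injective (β := (Fin m → Fin (i+1)) × (Fin m → Fin (i+1)))
    (fun x => (fun j => ⟨x.1.1 j, by
        have h := Finset.single_le_sum (f := x.1.1) (fun i _ => Nat.zero_le _) (Finset.mem_univ j)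
        have := x.2; omega⟩,
      fun j => ⟨x.1.2 j, by
        have h := Finset.single_le_sum (f := x.1.2) (fun i _ => Nat.zero_le _) (Finset.mem_univ j)
        have := x.2; omega⟩))
  intro x y h
  have h1 := congrArg Prod.fst h
  have h2 := congrArg Prod.snd h
  apply Subtype.ext
  apply Prod.ext
  · funext j; exact congrArg Fin.val (congrFun h1 j)
  · funext j; exact congrArg Fin.val (congrFun h2 j)

noncomputable def W2c (i : ℕ) : ℕ :=
  Nat.card {x : (Fin m → ℕ) × (Fin m → ℕ) // (∑ j, x.1 j) + (∑ j, x.2 j) = i}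

noncomputable def uC (i : ℕ) : ℕ :=
  Nat.card {x : (Fin m → ℕ) × (Fin m → ℕ) //
    ((∑ j, x.1 j) + (∑ j, x.2 j) = i) ∧ ∃ j, x.2 j = 0}

noncomputable def pallC (i : ℕ) : ℕ :=
  Nat.card {x : (Fin m → ℕ) × (Fin m → ℕ) //
    ((∑ j, x.1 j) + (∑ j, x.2 j) = i) ∧ ¬∃ j, x.2 j = 0}

lemma mk_W2c : (PowerSeries.mk fun i => (W2c m i : ℤ)) = (PowerSeries.mk 1) ^ (2*m) := by
  have key : ∀ i, W2c m i = ∑ p ∈ Finset.HasAntidiagonal.antidiagonal i, Wt m p.1 * Wt m p.2 := by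
    intro i
    unfold W2c Wt
    exact conv_card (fun g : Fin m → ℕ => ∑ j, g j) (fun g : Fin m → ℕ => ∑ j, g j)
      (fun i => finite_sumEq m i) (fun i => finite_sumEq m i) i
  ext k
  rw [PowerSeries.coeff_mk, key, two_mul, pow_add, ← mk_Wt, PowerSeries.coeff_mul]
  push_cast
  apply Finset.sum_congr rfl
  intro p _
  rw [PowerSeries.coeff_mk, PowerSeries.coeff_mk]

lemma W2c_split (i : ℕ) : W2c m i = uC m i + pallC m i := by
  classical
  haveI hf := finite_pairsum m i
  unfold W2c uC pallC
  rw [Nat.card_congr (Equiv.sumCompl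
    (fun x : {x : (Fin m → ℕ) × (Fin m → ℕ) // (∑ j, x.1 j) + (∑ j, x.2 j) = i} =>
      ∃ j, x.1.2 j = 0)).symm]
  haveI : Finite {x : {x : (Fin m → ℕ) × (Fin m → ℕ) // (∑ j, x.1 j) + (∑ j, x.2 j) = i} //
      ∃ j, x.1.2 j = 0} := Subtype.finite
  haveI : Finite {x : {x : (Fin m → ℕ) × (Fin m → ℕ) // (∑ j, x.1 j) + (∑ j, x.2 j) = i} //
      ¬∃ j, x.1.2 j = 0} := Subtype.finite
  rw [Nat.card_sum]
  congr 1
  · exact Nat.card_congr (Equiv.subtypeSubtypeEquivSubtypeInter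
      (fun x : (Fin m → ℕ) × (Fin m → ℕ) => (∑ j, x.1 j) + (∑ j, x.2 j) = i)
      (fun x => ∃ j, x.2 j = 0))
  · exact Nat.card_congr (Equiv.subtypeSubtypeEquivSubtypeInter
      (fun x : (Fin m → ℕ) × (Fin m → ℕ) => (∑ j, x.1 j) + (∑ j, x.2 j) = i)
      (fun x => ¬∃ j, x.2 j = 0))

lemma pallC_eq (i : ℕ) : pallC m i = if m ≤ i then W2c m (i - m) else 0 := by
  classical
  by_cases h : m ≤ i
  · rw [if_pos h]
    unfold pallC W2c
    apply Nat.card_congr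
    refine {
      toFun := fun y => ⟨(y.1.1, fun j => y.1.2 j - 1), ?_⟩
      invFun := fun z => ⟨(z.1.1, fun j => z.1.2 j + 1), ?_, ?_⟩
      left_inv := ?_
      right_inv := ?_ }
    · have h1 : ∀ j, 1 ≤ y.1.2 j := by
        intro j
        have := y.2.2
        push_neg at this
        exact Nat.one_le_iff_ne_zero.mpr (this j)
      have hsum := y.2.1
      have e1 : ∑ j, (y.1.2 j - 1) + m = ∑ j, y.1.2 j := by
        have : ∀ j : Fin m, y.1.2 j = (y.1.2 j - 1) + 1 := fun j => by have := h1 j; omega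
        calc ∑ j, (y.1.2 j - 1) + m
            = ∑ j, ((y.1.2 j - 1) + 1) := by
              rw [Finset.sum_add_distrib, Finset.sum_const, Finset.card_univ, Fintype.card_fin,
                smul_eq_mul, mul_one]
          _ = ∑ j, y.1.2 j := Finset.sum_congr rfl fun j _ => (this j).symm
      dsimp only
      omega
    · dsimp only
      have := z.2
      rw [Finset.sum_add_distrib, Finset.sum_const, Finset.card_univ, Fintype.card_fin,
        smul_eq_mul, mul_one]
      omega
    · push_neg
      intro j
      dsimp only
      omega
    · intro y
      have h1 : ∀ j, 1 ≤ y.1.2 j := by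
        intro j
        have := y.2.2
        push_neg at this
        exact Nat.one_le_iff_ne_zero.mpr (this j)
      apply Subtype.ext
      have hfun : (fun j => y.1.2 j - 1 + 1) = y.1.2 := funext fun j => by have := h1 j; omega
      show ((y.1.1, fun j => y.1.2 j - 1 + 1) : (Fin m → ℕ) × (Fin m → ℕ)) = y.1
      rw [hfun]
    · intro z
      apply Subtype.ext
      have hfun : (fun j => z.1.2 j + 1 - 1) = z.1.2 := funext fun j => by omega
      show ((z.1.1, fun j => z.1.2 j + 1 - 1) : (Fin m → ℕ) × (Fin m → ℕ)) = z.1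
      rw [hfun]
  · rw [if_neg h]
    unfold pallC
    haveI : IsEmpty {x : (Fin m → ℕ) × (Fin m → ℕ) //
        ((∑ j, x.1 j) + (∑ j, x.2 j) = i) ∧ ¬∃ j, x.2 j = 0} := by
      constructor
      rintro ⟨x, hsum, hne⟩
      push_neg at hne
      have h1 : ∀ j : Fin m, 1 ≤ x.2 j := fun j => Nat.one_le_iff_ne_zero.mpr (hne j)
      have h2 : m ≤ ∑ j, x.2 j := by
        calc m = ∑ _j : Fin m, 1 := by
              rw [Finset.sum_const, Finset.card_univ, Fintype.card_fin, smul_eq_mul, mul_one]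
          _ ≤ ∑ j, x.2 j := Finset.sum_le_sum fun j _ => h1 j
      omega
    exact Nat.card_of_isEmpty

lemma mk_uC : (PowerSeries.mk fun i => (uC m i : ℤ))
    = (1 - PowerSeries.X ^ m) * (PowerSeries.mk 1) ^ (2*m) := by
  have huC : ∀ i, (uC m i : ℤ) = (W2c m i : ℤ) - (pallC m i : ℤ) := by
    intro i
    have := W2c_split m i
    omega
  ext k
  rw [PowerSeries.coeff_mk, huC, sub_mul, one_mul, map_sub, ← mk_W2c,
    PowerSeries.coeff_mk, PowerSeries.coeff_X_pow_mul', pallC_eq]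
  split_ifs with h
  · rw [PowerSeries.coeff_mk]
  · push_cast
    ring
end PairCounts

section M2
variable (m : ℕ) [NeZero (2*m)]

/-- pairs-with-zero data type -/
def PZ (m : ℕ) : Type := {cd : (Fin m → ℕ) × (Fin m → ℕ) // ∃ j, cd.2 j = 0}
def fPZ (z : PZ m) : ℕ := (∑ j, z.1.1 j) + (∑ j, z.1.2 j)

lemma finite_fPZ (i : ℕ) : Finite {z : PZ m // fPZ m z = i} := by
  haveI := finite_pairsum m i
  apply Finite.of_injective
    (β := {x : (Fin m → ℕ) × (Fin m → ℕ) // (∑ j, x.1 j) + (∑ j, x.2 j) = i})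
    (fun z => ⟨z.1.1, z.2⟩)
  rintro ⟨⟨x, hx⟩, h1⟩ ⟨⟨y, hy⟩, h2⟩ h
  simp only [Subtype.mk.injEq] at h
  obtain rfl : x = y := congrArg Subtype.val h
  rfl

lemma card_fPZ (i : ℕ) : Nat.card {z : PZ m // fPZ m z = i} = uC m i := by
  unfold uC
  apply Nat.card_congr
  refine Equiv.trans (Equiv.subtypeSubtypeEquivSubtypeInter
    (fun cd : (Fin m → ℕ) × (Fin m → ℕ) => ∃ j, cd.2 j = 0)
    (fun cd => (∑ j, cd.1 j) + (∑ j, cd.2 j) = i)) (Equiv.subtypeEquivRight ?_)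
  intro x
  exact and_comm

/-- helper join -/
noncomputable def joinF (c0 c1 : Fin m → ℕ) : ZMod (2*m) → ℕ :=
  fun s => (fun p : Bool × Fin m => if p.1 then c1 p.2 else c0 p.2) ((eEquiv m).symm s)

lemma joinF_apply (c0 c1 : Fin m → ℕ) (p : Bool × Fin m) :
    joinF m c0 c1 (eEquiv m p) = if p.1 then c1 p.2 else c0 p.2 := by
  unfold joinF
  rw [Equiv.symm_apply_apply]

lemma sum_split (g : ZMod (2*m) → ℕ) :
    (∑ s, g s) = (∑ j, g (eEquiv m (false, j))) + (∑ j, g (eEquiv m (true, j))) := by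
  rw [← Equiv.sum_comp (eEquiv m) g, Fintype.sum_prod_type, Fintype.sum_bool]
  ring

lemma sum_joinF (c0 c1 : Fin m → ℕ) :
    (∑ s, joinF m c0 c1 s) = (∑ j, c0 j) + (∑ j, c1 j) := by
  rw [sum_split m]
  congr 1
  · apply Finset.sum_congr rfl; intro j _; rw [joinF_apply]; simp
  · apply Finset.sum_congr rfl; intro j _; rw [joinF_apply]; simp

lemma card_Tset (k : ℕ) :
    Nat.card (Tset m k) = ∑ p ∈ Finset.HasAntidiagonal.antidiagonal k, uC m p.1 * uC m p.2 := by
  classical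
  have one_ne : (1 : ZMod 2) ≠ 0 := by decide
  have e : Tset m k ≃ {x : PZ m × PZ m // fPZ m x.1 + fPZ m x.2 = k} := by
    refine {
      toFun := fun y => ⟨(⟨((fun j => y.1.1 (eEquiv m (false, j))),
                            (fun j => y.1.2 (eEquiv m (false, j)))), ?_⟩,
                          ⟨((fun j => y.1.1 (eEquiv m (true, j))),
                            (fun j => y.1.2 (eEquiv m (true, j)))), ?_⟩), ?_⟩
      invFun := fun x => ⟨(joinF m x.1.1.1.1 x.1.2.1.1, joinF m x.1.1.1.2 x.1.2.1.2), ?_, ?_⟩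
      left_inv := ?_
      right_inv := ?_ }
    · obtain ⟨s, hs, hz⟩ := y.2.2 0
      obtain ⟨⟨t, j⟩, rfl⟩ := (eEquiv m).surjective s
      rw [par_eEquiv] at hs
      cases t with
      | false => exact ⟨j, hz⟩
      | true => exact absurd hs one_ne
    · obtain ⟨s, hs, hz⟩ := y.2.2 1
      obtain ⟨⟨t, j⟩, rfl⟩ := (eEquiv m).surjective s
      rw [par_eEquiv] at hs
      cases t with
      | true => exact ⟨j, hz⟩
      | false => exact absurd hs.symm one_ne
    · have h1 := sum_split m y.1.1
      have h2 := sum_split m y.1.2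
      have hsum := y.2.1
      unfold fPZ
      dsimp only
      omega
    · -- sum for invFun
      have h1 := sum_joinF m x.1.1.1.1 x.1.2.1.1
      have h2 := sum_joinF m x.1.1.1.2 x.1.2.1.2
      have hx := x.2
      unfold fPZ at hx
      dsimp only at h1 h2 hx ⊢
      omega
    · -- min condition for invFun
      intro e
      fin_cases e
      · obtain ⟨j, hj⟩ := x.1.1.2
        refine ⟨eEquiv m (false, j), ?_, ?_⟩
        · rw [par_eEquiv]; rfl
        · dsimp only
          rw [joinF_apply]
          simpa using hj
      · obtain ⟨j, hj⟩ := x.1.2.2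
        refine ⟨eEquiv m (true, j), ?_, ?_⟩
        · rw [par_eEquiv]; rfl
        · dsimp only
          rw [joinF_apply]
          simpa using hj
    · -- left_inv
      intro y
      apply Subtype.ext
      dsimp only
      have key : ∀ g : ZMod (2*m) → ℕ,
          joinF m (fun j => g (eEquiv m (false, j))) (fun j => g (eEquiv m (true, j))) = g := by
        intro g
        funext s
        obtain ⟨⟨t, j⟩, rfl⟩ := (eEquiv m).surjective s
        rw [joinF_apply]
        cases t <;> rfl
      rw [key, key]
    · -- right_inv
      rintro ⟨⟨⟨⟨a0, b0⟩, h0⟩, ⟨⟨a1, b1⟩, h1⟩⟩, hx⟩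
      apply Subtype.ext
      dsimp only
      apply Prod.ext
      · apply Subtype.ext
        apply Prod.ext
        · funext j; simp [joinF_apply]
        · funext j; simp [joinF_apply]
      · apply Subtype.ext
        apply Prod.ext
        · funext j; simp [joinF_apply]
        · funext j; simp [joinF_apply]
  rw [Nat.card_congr e, conv_card (fPZ m) (fPZ m) (finite_fPZ m) (finite_fPZ m) k]
  apply Finset.sum_congr rfl
  intro p _
  rw [card_fPZ, card_fPZ]
end M2


section Final
variable (m : ℕ) [NeZero (2*m)]

lemma map_mk_one : PowerSeries.map (Int.castRingHom ℝ) (PowerSeries.mk 1 : PowerSeries ℤ)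
    = (PowerSeries.mk 1 : PowerSeries ℝ) := by
  ext k
  simp [PowerSeries.coeff_map, PowerSeries.coeff_mk]

lemma map_F : PowerSeries.map (Int.castRingHom ℝ)
      ((1 - PowerSeries.X ^ m) * (PowerSeries.mk 1) ^ (2*m) : PowerSeries ℤ)
    = ((1 - PowerSeries.X ^ m) * (PowerSeries.mk 1) ^ (2*m) : PowerSeries ℝ) := by
  rw [_root_.map_mul, _root_.map_sub, _root_.map_one, map_pow, PowerSeries.map_X, map_pow, map_mk_one]

lemma coeff_F (j : ℕ) :
    PowerSeries.coeff j ((1 - PowerSeries.X ^ m) * (PowerSeries.mk 1) ^ (2*m)) = (uC m j : ℝ) := by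
  rw [← map_F, PowerSeries.coeff_map, ← mk_uC, PowerSeries.coeff_mk]
  simp

lemma series_eq :
    (PowerSeries.mk fun k : ℕ =>
        (({x | x ∈ (k : ℝ) • DP (2 * m) ∧ IsInt (2 * m) x}.ncard : ℝ)))
    = ((1 - PowerSeries.X ^ m) * (PowerSeries.mk 1) ^ (2*m) : PowerSeries ℝ) ^ 2 := by
  ext k
  rw [PowerSeries.coeff_mk, ncard_lattice m k, ← Nat.card_coe_set_eq, card_Tset m k,
    pow_two, PowerSeries.coeff_mul]
  push_cast
  apply Finset.sum_congr rfl
  intro p _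
  rw [coeff_F, coeff_F]

lemma Pol_eq :
    ((1 - PowerSeries.X ^ m) * PowerSeries.mk 1 : PowerSeries ℝ)
      = ∑ i ∈ Finset.range m, PowerSeries.X ^ i := by
  have key : (PowerSeries.mk 1 : PowerSeries ℝ) * (1 - PowerSeries.X) = 1 :=
    PowerSeries.mk_one_mul_one_sub_eq_one ℝ
  have geo := geom_sum_mul (PowerSeries.X : PowerSeries ℝ) m
  have h2 : (1 - PowerSeries.X ^ m : PowerSeries ℝ)
      = (∑ i ∈ Finset.range m, PowerSeries.X ^ i) * (1 - PowerSeries.X) := by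
    linear_combination geo
  rw [h2, mul_assoc, mul_comm (1 - PowerSeries.X) (PowerSeries.mk 1), key, mul_one]

lemma h_eq (hm : 1 ≤ m) :
    ((1 - PowerSeries.X ^ m) * (PowerSeries.mk 1) ^ (2*m) : PowerSeries ℝ) ^ 2
      * (1 - PowerSeries.X) ^ (2 * (2 * m) - 2)
    = (∑ i ∈ Finset.range m, (PowerSeries.X : PowerSeries ℝ) ^ i) ^ 2 := by
  have key : (PowerSeries.mk 1 : PowerSeries ℝ) * (1 - PowerSeries.X) = 1 :=
    PowerSeries.mk_one_mul_one_sub_eq_one ℝ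
  have e1 : 2 * (2 * m) - 2 = 4 * m - 2 := by omega
  have e2 : 2 * m * 2 = 2 + (4 * m - 2) := by omega
  have expand : ((1 - PowerSeries.X ^ m) * (PowerSeries.mk 1) ^ (2*m) : PowerSeries ℝ) ^ 2
      * (1 - PowerSeries.X) ^ (4 * m - 2)
      = ((1 - PowerSeries.X ^ m) * PowerSeries.mk 1) ^ 2
        * ((PowerSeries.mk 1) * (1 - PowerSeries.X)) ^ (4 * m - 2) := by
    rw [mul_pow, mul_pow, mul_pow, ← pow_mul, e2, pow_add]
    ring
  rw [e1, expand, key, one_pow, mul_one, Pol_eq]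

lemma coeff_Pol (j : ℕ) :
    PowerSeries.coeff j (∑ i ∈ Finset.range m, (PowerSeries.X : PowerSeries ℝ) ^ i)
      = if j < m then 1 else 0 := by
  rw [_root_.map_sum]
  simp only [PowerSeries.coeff_X_pow]
  rw [Finset.sum_ite_eq (Finset.range m) j (fun _ => (1:ℝ))]
  simp [Finset.mem_range]

lemma coeff_h (i : ℕ) :
    PowerSeries.coeff i ((∑ i ∈ Finset.range m, (PowerSeries.X : PowerSeries ℝ) ^ i) ^ 2)
      = ((min (i+1) m - (i+1-m) : ℕ) : ℝ) := by
  classical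
  rw [pow_two, PowerSeries.coeff_mul, Finset.Nat.sum_antidiagonal_eq_sum_range_succ_mk]
  simp only [coeff_Pol]
  have step : ∀ u ∈ Finset.range (i+1),
      (if u < m then (1:ℝ) else 0) * (if i - u < m then 1 else 0)
      = if (u < m ∧ i - u < m) then 1 else 0 := by
    intro u _
    split_ifs with h1 h2 h3 h4 <;> simp_all
  rw [Finset.sum_congr rfl step, Finset.sum_boole]
  have hfilter : (Finset.range (i+1)).filter (fun u => u < m ∧ i - u < m)
      = Finset.Ico (i+1-m) (min (i+1) m) := by
    ext u
    simp only [Finset.mem_filter, Finset.mem_range, Finset.mem_Ico, lt_min_iff]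
    omega
  rw [hfilter, Nat.card_Ico]

lemma sum_c (hm : 2 ≤ m) :
    ∑ i ∈ Finset.range (2*m-1), (min (i+1) m - (i+1-m)) = m^2 := by
  obtain ⟨m', rfl⟩ : ∃ m', m = m' + 2 := ⟨m - 2, by omega⟩
  clear hm
  rw [Finset.range_eq_Ico,
    ← Finset.sum_Ico_consecutive _ (Nat.zero_le (m'+2)) (by omega : m'+2 ≤ 2*(m'+2)-1)]
  have h1 : ∑ i ∈ Finset.Ico 0 (m'+2), (min (i+1) (m'+2) - (i+1-(m'+2)))
      = ∑ i ∈ Finset.range (m'+2), (i+1) := by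
    rw [← Finset.range_eq_Ico]
    exact Finset.sum_congr rfl (fun i hi => by rw [Finset.mem_range] at hi; omega)
  have h2 : ∑ i ∈ Finset.Ico (m'+2) (2*(m'+2)-1), (min (i+1) (m'+2) - (i+1-(m'+2)))
      = ∑ j ∈ Finset.range (m'+1), (m'+1-j) := by
    rw [Finset.sum_Ico_eq_sum_range]
    have e : 2*(m'+2)-1-(m'+2) = m'+1 := by omega
    rw [e]
    exact Finset.sum_congr rfl (fun j hj => by rw [Finset.mem_range] at hj; omega)
  have h3 : ∑ j ∈ Finset.range (m'+1), (m'+1-j) = ∑ j ∈ Finset.range (m'+1), (j+1) := by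
    have hr := Finset.sum_range_reflect (fun t => t + 1) (m'+1)
    rw [← hr]
    exact Finset.sum_congr rfl (fun j hj => by rw [Finset.mem_range] at hj; omega)
  have h4 : ∀ N : ℕ, ∑ j ∈ Finset.range N, (j+1) = (∑ j ∈ Finset.range N, j) + N := by
    intro N
    rw [Finset.sum_add_distrib, Finset.sum_const, Finset.card_range, smul_eq_mul, mul_one]
  have g1 := Finset.sum_range_id_mul_two (m'+2)
  have g2 := Finset.sum_range_id_mul_two (m'+1)
  rw [h1, h2, h3, h4, h4]
  have e1 : m' + 2 - 1 = m' + 1 := by omega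
  have e2 : m' + 1 - 1 = m' := by omega
  rw [e1] at g1
  rw [e2] at g2
  nlinarith [g1, g2]

end Final

/-- for even `n = 2m`, `DP_n` is Gorenstein of codegree `n` (its
`h*`-polynomial has degree `2m-2 = (dim+1) - n` and is symmetric) and its normalized
volume (the sum of the `h*`-vector entries) equals `n²/4 = m²`. -/
theorem DP_even_Gorenstein_and_volume (m : ℕ) [NeZero (2 * m)] (hm : 2 ≤ m) :
    ∀ h : PowerSeries ℝ,
      h = (PowerSeries.mk fun k : ℕ =>
            (({x | x ∈ (k : ℝ) • DP (2 * m) ∧ IsInt (2 * m) x}.ncard : ℝ)))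
          * (1 - PowerSeries.X) ^ (2 * (2 * m) - 2) →
      (∀ i, 2 * m - 2 < i → PowerSeries.coeff i h = 0) ∧
      PowerSeries.coeff (2 * m - 2) h ≠ 0 ∧
      (∀ i ≤ 2 * m - 2, PowerSeries.coeff i h = PowerSeries.coeff (2 * m - 2 - i) h) ∧
      ∑ i ∈ Finset.range (2 * m - 1), PowerSeries.coeff i h = (m : ℝ) ^ 2 := by
  intro h hdef
  have hPol : h = (∑ i ∈ Finset.range m, (PowerSeries.X : PowerSeries ℝ) ^ i) ^ 2 := by
    rw [hdef, series_eq, h_eq m (by omega)]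
  have hco : ∀ i, PowerSeries.coeff i h = ((min (i+1) m - (i+1-m) : ℕ) : ℝ) := by
    intro i
    rw [hPol, coeff_h]
  refine ⟨?_, ?_, ?_, ?_⟩
  · intro i hi
    rw [hco]
    have : min (i+1) m - (i+1-m) = 0 := by omega
    rw [this, Nat.cast_zero]
  · rw [hco]
    have : min (2*m-2+1) m - (2*m-2+1-m) = 1 := by omega
    rw [this, Nat.cast_one]
    exact one_ne_zero
  · intro i hi
    rw [hco, hco]
    congr 1
    omega
  · rw [Finset.sum_congr rfl (fun i _ => hco i), ← Nat.cast_sum, sum_c m hm]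
    push_cast
    ring
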